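/- If (d, r) is an arithmetical structure on the wheel graph W_n and d_i = 1 for some vertex v_i, then d_u > 1 for every vertex u adjacent to v_i in W_n. -/
import Mathlib


/-- Predecessor of cycle vertex `i` in the cycle `v_1, …, v_n`. -/
def cyclePrev (n i : ℕ) : ℕ := if i = 1 then n else i - 1

/-- Successor of cycle vertex `i` in the cycle `v_1, …, v_n`. -/
def cycleNext (n i : ℕ) : ℕ := if i = n then 1 else i + 1

/-- `(d, r)` is an arithmetical structure on the wheel graph `W_n`, whose hub `v_0`
is indexed by `0` and whose cycle vertices `v_1, …, v_n` are indexed by `1, …, n`. -/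
def IsWheelArithStructure (n : ℕ) (d r : ℕ → ℕ) : Prop :=
  (∀ i ≤ n, 0 < d i) ∧ (∀ i ≤ n, 0 < r i) ∧
  (Finset.range (n + 1)).gcd r = 1 ∧
  d 0 * r 0 = ∑ i ∈ Finset.Icc 1 n, r i ∧
  ∀ i, 1 ≤ i → i ≤ n → d i * r i = r 0 + r (cyclePrev n i) + r (cycleNext n i)

/-- If `(d, r)` is an arithmetical structure on `W_n` and `d i = 1` at some vertex,
then `d u > 1` at all vertices `u` adjacent to `v_i`. -/
theorem wheel_d_eq_one_neighbors_gt_one (n : ℕ) (hn : 3 ≤ n) (d r : ℕ → ℕ)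
    (h : IsWheelArithStructure n d r) :
    (d 0 = 1 → ∀ i, 1 ≤ i → i ≤ n → 1 < d i) ∧
    (∀ i, 1 ≤ i → i ≤ n → d i = 1 →
      1 < d 0 ∧ 1 < d (cyclePrev n i) ∧ 1 < d (cycleNext n i)) := by
  obtain ⟨hd, hr, hgcd, h0, hc⟩ := h
  have hsum : ∀ i, 1 ≤ i → i ≤ n → r i ≤ ∑ j ∈ Finset.Icc 1 n, r j := fun i h1 h2 =>
    Finset.single_le_sum (f := r) (fun _ _ => Nat.zero_le _) (Finset.mem_Icc.mpr ⟨h1, h2⟩)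
  have hprev : ∀ i, 1 ≤ i → i ≤ n → 1 ≤ cyclePrev n i ∧ cyclePrev n i ≤ n := by
    intro i h1 h2; unfold cyclePrev; split <;> omega
  have hnext : ∀ i, 1 ≤ i → i ≤ n → 1 ≤ cycleNext n i ∧ cycleNext n i ≤ n := by
    intro i h1 h2; unfold cycleNext; split <;> omega
  have hnp : ∀ i, 1 ≤ i → i ≤ n → cycleNext n (cyclePrev n i) = i := by
    intro i h1 h2; unfold cyclePrev cycleNext; split <;> split <;> omega
  have hpn : ∀ i, 1 ≤ i → i ≤ n → cyclePrev n (cycleNext n i) = i := by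
    intro i h1 h2; unfold cycleNext cyclePrev; split <;> split <;> omega
  constructor
  · intro h0' i h1 h2
    by_contra hlt
    have hdi : d i = 1 := by have := hd i h2; omega
    have hi := hc i h1 h2
    rw [hdi, one_mul] at hi
    rw [h0', one_mul] at h0
    have h3 := hsum i h1 h2
    have h4 := hr (cyclePrev n i) (hprev i h1 h2).2
    have h5 := hr (cycleNext n i) (hnext i h1 h2).2
    omega
  · intro i h1 h2 hdi
    have hi := hc i h1 h2
    rw [hdi, one_mul] at hi
    obtain ⟨hp1, hp2⟩ := hprev i h1 h2
    obtain ⟨hn1, hn2⟩ := hnext i h1 h2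
    refine ⟨?_, ?_, ?_⟩
    · by_contra hlt
      have hd0 : d 0 = 1 := by have := hd 0 (Nat.zero_le _); omega
      rw [hd0, one_mul] at h0
      have h3 := hsum i h1 h2
      have h4 := hr (cyclePrev n i) hp2
      have h5 := hr (cycleNext n i) hn2
      omega
    · by_contra hlt
      have hdp : d (cyclePrev n i) = 1 := by have := hd _ hp2; omega
      have hp := hc _ hp1 hp2
      rw [hdp, one_mul, hnp i h1 h2] at hp
      have h4 := hr 0 (Nat.zero_le _)
      have h5 := hr (cyclePrev n (cyclePrev n i)) (hprev _ hp1 hp2).2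
      omega
    · by_contra hlt
      have hdn : d (cycleNext n i) = 1 := by have := hd _ hn2; omega
      have hp := hc _ hn1 hn2
      rw [hdn, one_mul, hpn i h1 h2] at hp
      have h4 := hr 0 (Nat.zero_le _)
      have h5 := hr (cycleNext n (cycleNext n i)) (hnext _ hn1 hn2).2
      omega
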